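/- arXiv:2411.03277 — 4 statements merged into one kernel-verified Lean document; each statement's English description precedes it below -/
import Mathlib

section
/- Let φ : ℝ≥0 × ℝ → ℝ be a semiflow on the real line such that φ(t,0) = 0 for all t ≥ 0, each time-t map φ(t,·) : ℝ → ℝ is injective, and every trajectory converges to the origin, i.e., φ(t,x) → 0 as t → +∞ for every x ∈ ℝ. Then for every t > 0: if x > 0 then 0 < φ(t,x) < x, and if x < 0 then x < φ(t,x) < 0. Consequently, for every s ∈ (0,1) and every x ≠ 0, the homotopy vector field H(s,x) = (1/s)·(φ(s/(1-s), x) - x) satisfies x·H(s,x) < 0; that is, for n = 1 the homotopy H from a GAS vector field to -x preserves global asymptotic stability of the origin because the sign of H(s,·) cannot flip. -/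
open scoped NNReal
open Filter

theorem scalar_flow_homotopy_preserves_stability
    (φ : ℝ≥0 → ℝ → ℝ)
    (hcont : Continuous fun p : ℝ≥0 × ℝ => φ p.1 p.2)
    (hzero : ∀ x : ℝ, φ 0 x = x)
    (hsemigroup : ∀ (s t : ℝ≥0) (x : ℝ), φ s (φ t x) = φ (s + t) x)
    (horigin : ∀ t : ℝ≥0, φ t 0 = 0)
    (hinj : ∀ t : ℝ≥0, Function.Injective (φ t))
    (hattr : ∀ x : ℝ, Tendsto (fun t : ℝ≥0 => φ t x) atTop (nhds 0)) :
    (∀ t : ℝ≥0, 0 < t → ∀ x : ℝ,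
      (0 < x → 0 < φ t x ∧ φ t x < x) ∧ (x < 0 → x < φ t x ∧ φ t x < 0)) ∧
    ∀ s ∈ Set.Ioo (0:ℝ) 1, ∀ x : ℝ, x ≠ 0 →
      x * ((1/s) * (φ ((s / (1 - s)).toNNReal) x - x)) < 0 := by
  -- φ t x ≠ 0 when x ≠ 0
  have hne : ∀ (t : ℝ≥0) (x : ℝ), x ≠ 0 → φ t x ≠ 0 := by
    intro t x hx h
    exact hx (hinj t (by rw [h, horigin]))
  have hcx : ∀ x : ℝ, Continuous fun t : ℝ≥0 => φ t x := by
    intro x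
    exact hcont.comp (continuous_id.prodMk continuous_const)
  -- sign preservation
  have hpos : ∀ (t : ℝ≥0) (x : ℝ), 0 < x → 0 < φ t x := by
    intro t x hx
    by_contra h
    push_neg at h
    have h' : φ t x < 0 := lt_of_le_of_ne h (hne t x (ne_of_gt hx))
    have hsub := intermediate_value_Icc' (zero_le : (0:ℝ≥0) ≤ t) ((hcx x).continuousOn)
    have h0 : (0:ℝ) ∈ Set.Icc (φ t x) (φ 0 x) := by
      constructor
      · exact h'.le
      · rw [hzero]; exact hx.le
    obtain ⟨c, -, hc⟩ := hsub h0
    exact hne c x (ne_of_gt hx) hc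
  have hneg : ∀ (t : ℝ≥0) (x : ℝ), x < 0 → φ t x < 0 := by
    intro t x hx
    by_contra h
    push_neg at h
    have h' : 0 < φ t x := lt_of_le_of_ne h (Ne.symm (hne t x (ne_of_lt hx)))
    have hsub := intermediate_value_Icc (zero_le : (0:ℝ≥0) ≤ t) ((hcx x).continuousOn)
    have h0 : (0:ℝ) ∈ Set.Icc (φ 0 x) (φ t x) := by
      constructor
      · rw [hzero]; exact hx.le
      · exact h'.le
    obtain ⟨c, -, hc⟩ := hsub h0
    exact hne c x (ne_of_lt hx) hc
  -- each time-t map is strictly monotone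
  have hmono : ∀ t : ℝ≥0, StrictMono (φ t) := by
    intro t
    have hc : Continuous (φ t) := hcont.comp (continuous_const.prodMk continuous_id)
    rcases hc.strictMono_of_inj (hinj t) with h | h
    · exact h
    · exfalso
      have h1 : φ t 1 < φ t 0 := h (by norm_num)
      rw [horigin] at h1
      exact absurd (hpos t 1 one_pos) (not_lt.mpr h1.le)
  -- limit of iterates
  have hlim : ∀ (t : ℝ≥0), 0 < t → ∀ x : ℝ,
      Tendsto (fun n : ℕ => φ (n • t) x) atTop (nhds 0) := by
    intro t ht x
    refine (hattr x).comp ?_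
    rw [tendsto_atTop]
    intro b
    obtain ⟨N, hN⟩ := Archimedean.arch b ht
    filter_upwards [eventually_ge_atTop N] with n hn
    exact hN.trans (nsmul_le_nsmul_left (zero_le : (0:ℝ≥0) ≤ t) hn)
  -- strict decrease for positive x
  have key : ∀ t : ℝ≥0, 0 < t → ∀ x : ℝ, 0 < x → φ t x < x := by
    intro t ht x hx
    by_contra h
    push_neg at h
    have hstep : ∀ n : ℕ, x ≤ φ (n • t) x := by
      intro n
      induction n with
      | zero => simp [hzero]
      | succ n ih =>
        have heq : φ ((n + 1) • t) x = φ t (φ (n • t) x) := by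
          rw [hsemigroup, succ_nsmul, add_comm]
        rw [heq]
        calc x ≤ φ t x := h
          _ ≤ φ t (φ (n • t) x) := (hmono t).monotone ih
    have := ge_of_tendsto (hlim t ht x) (Eventually.of_forall hstep)
    linarith
  have keyneg : ∀ t : ℝ≥0, 0 < t → ∀ x : ℝ, x < 0 → x < φ t x := by
    intro t ht x hx
    by_contra h
    push_neg at h
    have hstep : ∀ n : ℕ, φ (n • t) x ≤ x := by
      intro n
      induction n with
      | zero => simp [hzero]
      | succ n ih =>
        have heq : φ ((n + 1) • t) x = φ t (φ (n • t) x) := by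
          rw [hsemigroup, succ_nsmul, add_comm]
        rw [heq]
        calc φ t (φ (n • t) x) ≤ φ t x := (hmono t).monotone ih
          _ ≤ x := h
    have := le_of_tendsto (hlim t ht x) (Eventually.of_forall hstep)
    linarith
  refine ⟨fun t ht x => ⟨fun hx => ⟨hpos t x hx, key t ht x hx⟩,
    fun hx => ⟨keyneg t ht x hx, hneg t x hx⟩⟩, ?_⟩
  intro s hs x hx
  obtain ⟨hs0, hs1⟩ := hs
  have hdiv : (0:ℝ) < s / (1 - s) := div_pos hs0 (by linarith)
  have ht : (0:ℝ≥0) < (s / (1 - s)).toNNReal := Real.toNNReal_pos.mpr hdiv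
  have hsinv : (0:ℝ) < 1 / s := by positivity
  rcases hx.lt_or_gt with hxneg | hxpos
  · have hlt := keyneg _ ht x hxneg
    have : 0 < (1/s) * (φ ((s / (1 - s)).toNNReal) x - x) := by
      apply mul_pos hsinv; linarith
    exact mul_neg_of_neg_of_pos hxneg this
  · have hlt := key _ ht x hxpos
    have : (1/s) * (φ ((s / (1 - s)).toNNReal) x - x) < 0 := by
      apply mul_neg_of_pos_of_neg hsinv; linarith
    exact mul_neg_of_pos_of_neg hxpos this
end

section
/- Let A be an n×n complex matrix all of whose eigenvalues (complex roots of its characteristic polynomial) have strictly negative real part. Then for every τ > 0 and every s ∈ (0,1], every eigenvalue of the matrix (1/s)·(exp(τ·A) - I) has strictly negative real part. (Indeed, each eigenvalue of exp(τ·A) - I has the form e^{τλ} - 1 with λ an eigenvalue of A, and |e^{τλ}| = e^{τ·Re λ} < 1 implies Re(e^{τλ} - 1) < 0.) Hence, for a Hurwitz matrix A, the canonical homotopy H(s,x) = (1/s)(φ^{s/(1-s)}(x) - x) between ẋ = Ax and ẋ = -x passes only through Hurwitz linear vector fields, so stability is preserved throughout the homotopy. -/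
open Polynomial NormedSpace Matrix
lemma my_charpoly_isRoot_iff {n : ℕ} (M : Matrix (Fin n) (Fin n) ℂ) (z : ℂ) :
    M.charpoly.IsRoot z ↔ z ∈ spectrum ℂ M := by
  have hmap : (Matrix.charmatrix M).map (Polynomial.evalRingHom z)
      = z • (1 : Matrix (Fin n) (Fin n) ℂ) - M := by
    ext i j
    by_cases h : i = j <;>
      simp [Matrix.charmatrix_apply, Matrix.map_apply, Matrix.diagonal, h,
        Matrix.one_apply, Matrix.smul_apply]
  rw [Polynomial.IsRoot, Matrix.charpoly, ← Polynomial.coe_evalRingHom, RingHom.map_det, RingHom.mapMatrix_apply, hmap,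
    spectrum.mem_iff]
  have : algebraMap ℂ (Matrix (Fin n) (Fin n) ℂ) z = z • 1 := Algebra.algebraMap_eq_smul_one z
  rw [this]
  constructor
  · intro hdet hunit
    have := (Matrix.isUnit_iff_isUnit_det _).mp hunit
    rw [hdet] at this
    exact (not_isUnit_zero this : False)
  · intro hunit
    by_contra hdet
    exact hunit ((Matrix.isUnit_iff_isUnit_det _).mpr (isUnit_iff_ne_zero.mpr hdet))

lemma my_spectrum_exp {n : ℕ} (B : Matrix (Fin n) (Fin n) ℂ) {u : ℂ}
    (hu : u ∈ spectrum ℂ (exp B)) :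
    ∃ lam ∈ spectrum ℂ B, u = exp lam := by
  letI : SeminormedRing (Matrix (Fin n) (Fin n) ℂ) := Matrix.linftyOpSemiNormedRing
  letI : NormedRing (Matrix (Fin n) (Fin n) ℂ) := Matrix.linftyOpNormedRing
  letI : NormedAlgebra ℂ (Matrix (Fin n) (Fin n) ℂ) := Matrix.linftyOpNormedAlgebra
  -- nontriviality
  have hnt : Nontrivial (Matrix (Fin n) (Fin n) ℂ) := by
    rw [← not_subsingleton_iff_nontrivial]
    intro h
    exact spectrum.mem_iff.mp hu (isUnit_of_subsingleton _)
  -- exp B is a polynomial in B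
  have hsum : HasSum (fun k : ℕ => (k.factorial⁻¹ : ℂ) • B ^ k) (exp B) :=
    exp_series_hasSum_exp' B
  obtain ⟨q, hq⟩ : ∃ q : ℂ[X], Polynomial.aeval B q = exp B := by
    have hmem : exp B ∈ Algebra.adjoin ℂ ({B} : Set (Matrix (Fin n) (Fin n) ℂ)) := by
      have hclosed : IsClosed ((Subalgebra.toSubmodule
          (Algebra.adjoin ℂ ({B} : Set (Matrix (Fin n) (Fin n) ℂ)))) : Set (Matrix (Fin n) (Fin n) ℂ)) :=
        Submodule.closed_of_finiteDimensional _
      refine hclosed.mem_of_tendsto hsum (Filter.Eventually.of_forall fun s => ?_)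
      exact Submodule.sum_mem _ fun k _ => Submodule.smul_mem _ _
        (Subalgebra.pow_mem _ (Algebra.self_mem_adjoin_singleton ℂ B) k)
    rw [Algebra.adjoin_singleton_eq_range_aeval] at hmem
    exact hmem
  have hnon : (spectrum ℂ B).Nonempty := spectrum.nonempty B
  have hspec := spectrum.map_polynomial_aeval_of_nonempty B q hnon
  rw [hq] at hspec
  rw [hspec] at hu
  obtain ⟨lam, hlam, rfl⟩ := hu
  refine ⟨lam, hlam, ?_⟩
  -- get an eigenvector
  have hlam' : lam ∈ spectrum ℂ (Matrix.toLinAlgEquiv' B) := by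
    rwa [AlgEquiv.spectrum_eq]
  have hev : Module.End.HasEigenvalue (Matrix.toLinAlgEquiv' B) lam :=
    Module.End.hasEigenvalue_iff_mem_spectrum.mpr hlam'
  obtain ⟨v, hv⟩ := hev.exists_hasEigenvector
  have hvB : B *ᵥ v = lam • v := by
    have := hv.apply_eq_smul
    simpa [Matrix.toLinAlgEquiv'_apply, Matrix.toLin'_apply] using this
  have hpow : ∀ k : ℕ, B ^ k *ᵥ v = lam ^ k • v := by
    intro k
    induction k with
    | zero => simp
    | succ k ih =>
      rw [pow_succ, ← Matrix.mulVec_mulVec, hvB, Matrix.mulVec_smul, ih,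
        smul_comm, ← smul_assoc, smul_eq_mul, ← pow_succ]
  -- apply the continuous linear map M ↦ M *ᵥ v
  let L0 : Matrix (Fin n) (Fin n) ℂ →ₗ[ℂ] (Fin n → ℂ) :=
    { toFun := fun M => M *ᵥ v
      map_add' := fun M N => Matrix.add_mulVec M N v
      map_smul' := fun c M => Matrix.smul_mulVec c M v }
  let L : Matrix (Fin n) (Fin n) ℂ →L[ℂ] (Fin n → ℂ) :=
    ⟨L0, L0.continuous_of_finiteDimensional⟩
  have h1 : HasSum (fun k : ℕ => L ((k.factorial⁻¹ : ℂ) • B ^ k)) (L (exp B)) :=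
    L.hasSum hsum
  have h1' : HasSum (fun k : ℕ => ((k.factorial⁻¹ : ℂ) * lam ^ k) • v)
      ((exp B) *ᵥ v) := by
    convert h1 using 2 with k
    show ((k.factorial⁻¹ : ℂ) * lam ^ k) • v = ((k.factorial⁻¹ : ℂ) • B ^ k) *ᵥ v
    rw [Matrix.smul_mulVec, hpow, mul_smul]
    rfl
  have h2 : HasSum (fun k : ℕ => ((k.factorial⁻¹ : ℂ) * lam ^ k) • v)
      ((exp lam) • v) := by
    have := (exp_series_hasSum_exp' (𝕂 := ℂ) lam).smul_const v
    simpa [smul_eq_mul] using this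
  have hEv : (exp B) *ᵥ v = (exp lam) • v := h1'.unique h2
  -- the other computation of exp B *ᵥ v
  have h3 : aeval (Matrix.toLinAlgEquiv' B) q = Matrix.toLinAlgEquiv' (aeval B q) := by
    simpa using Polynomial.aeval_algHom_apply
      ((Matrix.toLinAlgEquiv' : Matrix (Fin n) (Fin n) ℂ ≃ₐ[ℂ] _).toAlgHom) B q
  have h5 := Module.End.aeval_apply_of_hasEigenvector (p := q) hv
  rw [h3] at h5
  have hEv' : (aeval B q) *ᵥ v = (eval lam q) • v := by
    simpa [Matrix.toLinAlgEquiv'_apply, Matrix.toLin'_apply] using h5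
  rw [hq, hEv] at hEv'
  have hzero : (exp lam - eval lam q) • v = 0 := by
    rw [sub_smul, hEv', sub_self]
  rcases smul_eq_zero.mp hzero with h | h
  · exact (sub_eq_zero.mp h).symm
  · exact absurd h hv.right

theorem canonical_homotopy_of_Hurwitz_matrix_stays_Hurwitz
    {n : ℕ} (A : Matrix (Fin n) (Fin n) ℂ)
    (hA : ∀ z : ℂ, A.charpoly.IsRoot z → z.re < 0) :
    ∀ τ : ℝ, 0 < τ → ∀ s ∈ Set.Ioc (0:ℝ) 1,
      ∀ z : ℂ, (((1/s : ℝ) : ℂ) •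
          (NormedSpace.exp ((τ : ℂ) • A) - 1)).charpoly.IsRoot z → z.re < 0 := by
  intro τ hτ s hs z hz
  rw [my_charpoly_isRoot_iff] at hz
  have hs0 : (0:ℝ) < s := hs.1
  have hsne : ((1/s : ℝ) : ℂ) ≠ 0 := Complex.ofReal_ne_zero.mpr (by positivity)
  set c : ℂˣ := Units.mk0 _ hsne with hc
  have hcs : (((1/s : ℝ) : ℂ)) • (exp ((τ:ℂ) • A) - 1) = c • (exp ((τ:ℂ) • A) - 1) := rfl
  rw [hcs, spectrum.unit_smul_eq_smul] at hz
  obtain ⟨w, hw, rfl⟩ := hz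
  -- w ∈ spectrum of exp B - 1
  have h1 : exp ((τ:ℂ) • A) - 1
      = exp ((τ:ℂ) • A) - algebraMap ℂ (Matrix (Fin n) (Fin n) ℂ) 1 := by
    simp
  rw [h1, ← spectrum.sub_singleton_eq] at hw
  obtain ⟨u, hu, one, hone, rfl⟩ := hw
  obtain rfl : one = 1 := hone
  -- u = exp of an eigenvalue of τ • A
  obtain ⟨lam, hlam, rfl⟩ := my_spectrum_exp ((τ:ℂ) • A) hu
  -- lam = τ * μ with μ eigenvalue of A
  have hτne : ((τ:ℂ)) ≠ 0 := Complex.ofReal_ne_zero.mpr (ne_of_gt hτ)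
  set t : ℂˣ := Units.mk0 _ hτne with ht
  have hts : ((τ:ℂ)) • A = t • A := rfl
  rw [hts, spectrum.unit_smul_eq_smul] at hlam
  obtain ⟨μ, hμ, rfl⟩ := hlam
  have hμre : μ.re < 0 := hA μ ((my_charpoly_isRoot_iff A μ).mpr hμ)
  -- compute real parts
  have htmu : ((t : ℂ) • μ).re = τ * μ.re := by
    simp [ht, Units.smul_def, smul_eq_mul, Complex.mul_re]
  have habs : (exp ((t:ℂ) • μ)).re < 1 := by
    have hexp : exp ((t:ℂ) • μ) = Complex.exp ((t:ℂ) • μ) := by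
      rw [Complex.exp_eq_exp_ℂ]
    calc (exp ((t:ℂ) • μ)).re ≤ ‖exp ((t:ℂ) • μ)‖ := Complex.re_le_norm _
      _ = Real.exp (((t:ℂ) • μ).re) := by rw [hexp, Complex.norm_exp]
      _ < 1 := by
          rw [htmu]
          exact Real.exp_lt_one_iff.mpr (mul_neg_of_pos_of_neg hτ hμre)
  have hre : ((c : ℂ) • (exp ((t:ℂ) • μ) - 1)).re
      = (1/s) * ((exp ((t:ℂ) • μ)).re - 1) := by
    simp [hc, Units.smul_def, smul_eq_mul, Complex.mul_re, Complex.ofReal_re, Complex.ofReal_im,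
      Complex.sub_re, Complex.one_re]
  rw [hre]
  exact mul_neg_of_pos_of_neg (by positivity) (by linarith)
end

section
/- Consider the function v_i : ℝ → ℝ defined by v_i(x) = ½x² + (3/2)·sin²(x). Then: (a) v_i(0) = 0 and v_i(x) > 0 for every x ≠ 0, so 0 is the unique global minimizer of v_i; (b) v_i is coercive: v_i(x) → +∞ as |x| → +∞; and (c) v_i is invex in the strong sense that its derivative v_i'(x) = x + (3/2)·sin(2x) vanishes only at x = 0, i.e., every critical point of v_i is the global minimizer. -/
open Filter

/-- The coercive invex function `v_i(x) = x²/2 + (3/2) sin²(x)`. -/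
noncomputable def vi (x : ℝ) : ℝ := (1/2) * x^2 + (3/2) * (Real.sin x)^2

lemma crit_pos : ∀ x : ℝ, 0 < x → 0 < x + (3/2) * Real.sin (2*x) := by
  intro x hx
  rcases le_or_gt x (3/2) with h | h
  · have hs : 0 ≤ Real.sin (2*x) := by
      apply Real.sin_nonneg_of_nonneg_of_le_pi (by linarith)
      have := Real.pi_gt_three
      linarith
    nlinarith
  · have := Real.neg_one_le_sin (2*x)
    nlinarith

theorem vi_is_coercive_and_invex :
    (vi 0 = 0 ∧ ∀ x : ℝ, x ≠ 0 → 0 < vi x) ∧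
    Tendsto vi (cocompact ℝ) atTop ∧
    (∀ x : ℝ, HasDerivAt vi (x + (3/2) * Real.sin (2*x)) x) ∧
    (∀ x : ℝ, x + (3/2) * Real.sin (2*x) = 0 → x = 0) := by
  refine ⟨⟨by simp [vi], fun x hx => ?_⟩, ?_, fun x => ?_, fun x hx => ?_⟩
  · have h1 : 0 < (1/2 : ℝ) * x^2 := by positivity
    have h2 : 0 ≤ (3/2 : ℝ) * (Real.sin x)^2 := by positivity
    unfold vi; linarith
  · apply tendsto_atTop_mono (fun x : ℝ => ?_)
      (((tendsto_pow_atTop (two_ne_zero)).comp tendsto_norm_cocompact_atTop).const_mul_atTop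
        (by norm_num : (0:ℝ) < 1/2))
    have h2 : 0 ≤ (3/2 : ℝ) * (Real.sin x)^2 := by positivity
    simp only [Function.comp, Real.norm_eq_abs, sq_abs, vi]
    linarith
  · have h1 : HasDerivAt (fun x : ℝ => (1/2) * x^2) x x := by
      simpa using ((hasDerivAt_pow 2 x).const_mul (1/2 : ℝ))
    have h2 : HasDerivAt (fun x : ℝ => (3/2) * (Real.sin x)^2)
        ((3/2) * Real.sin (2*x)) x := by
      have h := ((Real.hasDerivAt_sin x).pow 2).const_mul (3/2 : ℝ)
      refine h.congr_deriv ?_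
      rw [Real.sin_two_mul]; norm_num
    exact h1.add h2
  · by_contra hne
    rcases lt_or_gt_of_ne hne with h | h
    · have := crit_pos (-x) (by linarith)
      rw [show 2 * (-x) = -(2*x) by ring, Real.sin_neg] at this
      linarith
    · have := crit_pos x h
      linarith
end

section
/- Gaussian optimal transport interpolation preserves positive definiteness: let Σ₀ and Σ₁ be symmetric positive definite n×n real matrices, let Σ₀^{1/2} denote the positive definite square root of Σ₀, let B denote the positive definite square root of Σ₀^{1/2}·Σ₁·Σ₀^{1/2}, and set A = Σ₀^{-1/2}·B·Σ₀^{-1/2} (the optimal transport map between the centered Gaussians with covariances Σ₀ and Σ₁ is x ↦ Ax). Then for every s ∈ [0,1]: (a) the interpolated covariance satisfies the identity ((1-s)·I + s·A)·Σ₀·((1-s)·I + s·A)ᵀ = Σ₀^{-1/2}·((1-s)·Σ₀ + s·B)²·Σ₀^{-1/2} =: Σ(s); and (b) Σ(s) is symmetric positive definite. -/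
open Matrix

lemma myPosDef_smul {n : ℕ} {M : Matrix (Fin n) (Fin n) ℝ} (hM : M.PosDef)
    {c : ℝ} (hc : 0 < c) : (c • M).PosDef := by
  refine posDef_iff_dotProduct_mulVec.mpr ⟨?_, fun x hx => ?_⟩
  · show (c • M)ᴴ = c • M
    rw [conjTranspose_smul, hM.1.eq]
    simp
  · have := (posDef_iff_dotProduct_mulVec.mp hM).2 hx
    simp only [smul_mulVec, dotProduct_smul, smul_eq_mul]
    positivity

lemma myPosSemidef_smul {n : ℕ} {M : Matrix (Fin n) (Fin n) ℝ} (hM : M.PosSemidef)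
    {c : ℝ} (hc : 0 ≤ c) : (c • M).PosSemidef := by
  refine posSemidef_iff_dotProduct_mulVec.mpr ⟨?_, fun x => ?_⟩
  · show (c • M)ᴴ = c • M
    rw [conjTranspose_smul, hM.1.eq]
    simp
  · have := (posSemidef_iff_dotProduct_mulVec.mp hM).2 x
    simp only [smul_mulVec, dotProduct_smul, smul_eq_mul]
    positivity

lemma myPosDef_conj {n : ℕ} {M N : Matrix (Fin n) (Fin n) ℝ} (hM : M.PosDef)
    (hN : IsUnit N) : (N * M * Nᴴ).PosDef := by
  refine posDef_iff_dotProduct_mulVec.mpr ⟨isHermitian_mul_mul_conjTranspose N hM.1, fun x hx => ?_⟩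
  have hNH : IsUnit Nᴴ := (isUnit_conjTranspose N).mpr hN
  have hNx : Nᴴ *ᵥ x ≠ 0 := by
    intro h
    apply hx
    have h2 : ((Nᴴ)⁻¹ * Nᴴ) *ᵥ x = (Nᴴ)⁻¹ *ᵥ (0 : Fin n → ℝ) := by
      rw [← mulVec_mulVec, h]
    rw [nonsing_inv_mul _ ((isUnit_iff_isUnit_det _).mp hNH)] at h2
    simpa using h2
  have := (posDef_iff_dotProduct_mulVec.mp hM).2 hNx
  simpa only [star_mulVec, dotProduct_mulVec, vecMul_vecMul, Matrix.mul_assoc,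
    conjTranspose_conjTranspose] using this

theorem gaussian_OT_interpolation_preserves_positive_definiteness
    {n : ℕ} (Sigma0 Sigma1 : Matrix (Fin n) (Fin n) ℝ)
    (hSigma0 : Sigma0.PosDef) (hSigma1 : Sigma1.PosDef)
    -- `S` is the positive definite square root of `Sigma0`
    (S : Matrix (Fin n) (Fin n) ℝ) (hS : S.PosDef) (hSsq : S * S = Sigma0)
    -- `B` is the positive definite square root of `S * Sigma1 * S`
    (B : Matrix (Fin n) (Fin n) ℝ) (hB : B.PosDef) (hBsq : B * B = S * Sigma1 * S)
    -- the optimal transport map matrix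
    (A : Matrix (Fin n) (Fin n) ℝ) (hA : A = S⁻¹ * B * S⁻¹) :
    ∀ s ∈ Set.Icc (0:ℝ) 1,
      ((1-s) • (1 : Matrix (Fin n) (Fin n) ℝ) + s • A) * Sigma0 *
          ((1-s) • (1 : Matrix (Fin n) (Fin n) ℝ) + s • A)ᵀ =
        S⁻¹ * ((1-s) • Sigma0 + s • B)^2 * S⁻¹ ∧
      (S⁻¹ * ((1-s) • Sigma0 + s • B)^2 * S⁻¹).PosDef := by
  intro s hs
  obtain ⟨hs0, hs1⟩ := hs
  have hSu : IsUnit S := hS.isUnit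
  have hSinv : S⁻¹ * S = 1 := nonsing_inv_mul _ ((isUnit_iff_isUnit_det _).mp hSu)
  have hSinv' : S * S⁻¹ = 1 := mul_nonsing_inv _ ((isUnit_iff_isUnit_det _).mp hSu)
  set C := (1-s) • Sigma0 + s • B with hC
  have hM : (1-s) • (1 : Matrix (Fin n) (Fin n) ℝ) + s • A = S⁻¹ * C * S⁻¹ := by
    rw [hA, hC, ← hSsq]
    rw [Matrix.mul_add, Matrix.add_mul, Matrix.mul_smul, Matrix.mul_smul,
      Matrix.smul_mul, Matrix.smul_mul]
    congr 1
    · rw [show S⁻¹ * (S * S) = S by rw [← Matrix.mul_assoc, hSinv, Matrix.one_mul], hSinv']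
  have hSt : Sᵀ = S := by simpa using hS.isHermitian.eq
  have hSsymm : S⁻¹ᵀ = S⁻¹ := by rw [transpose_nonsing_inv, hSt]
  have hCsymm : Cᵀ = C := by
    rw [hC, Matrix.transpose_add, Matrix.transpose_smul, Matrix.transpose_smul]
    have h0 : Sigma0ᵀ = Sigma0 := by simpa using hSigma0.isHermitian.eq
    have h1 : Bᵀ = B := by simpa using hB.isHermitian.eq
    rw [h0, h1]
  have hMsymm : (S⁻¹ * C * S⁻¹)ᵀ = S⁻¹ * C * S⁻¹ := by
    rw [Matrix.transpose_mul, Matrix.transpose_mul, hSsymm, hCsymm, Matrix.mul_assoc]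
  have hCpd : C.PosDef := by
    rcases eq_or_lt_of_le hs0 with h | h
    · rw [hC, ← h]
      simpa using hSigma0
    · exact Matrix.PosDef.posSemidef_add
        (myPosSemidef_smul hSigma0.posSemidef (by linarith)) (myPosDef_smul hB h)
  constructor
  · rw [hM, hMsymm, hSsq.symm, sq]
    calc S⁻¹ * C * S⁻¹ * (S * S) * (S⁻¹ * C * S⁻¹)
        = S⁻¹ * C * ((S⁻¹ * S) * (S * S⁻¹)) * C * S⁻¹ := by
          simp only [Matrix.mul_assoc]
      _ = S⁻¹ * (C * C) * S⁻¹ := by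
          rw [hSinv, hSinv']
          simp only [Matrix.mul_assoc, Matrix.one_mul]
  · have hCC : (C^2).PosDef := by
      have := myPosDef_conj (Matrix.PosDef.one) hCpd.isUnit
      rw [Matrix.mul_one, hCpd.isHermitian.eq] at this
      rwa [sq]
    have := myPosDef_conj hCC hS.inv.isUnit
    rwa [hS.inv.isHermitian.eq] at this
end
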